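/- arXiv:2310.07670 — 4 statements merged into one kernel-verified Lean document; each statement's English description precedes it below -/
import Mathlib

section
/- Let x0 ∈ ℝ², R, θ > 0, p ∈ [1,∞). Let a : ℝ² → ℝ² be affine, a(x) = A x + b, and let U ⊆ B(x0,R) with L²(U) ≥ θ L²(B(x0,R)). Then there is a constant c > 0 depending only on θ and p such that ‖a‖_{L^p(B(x0,R))} ≤ (√π R)^{2/p} ‖a‖_{L^∞(B(x0,R))} ≤ c ‖a‖_{L^p(U)} and |A| ≤ c R^{-(2/p+1)} ‖a‖_{L^p(U)}. -/
open Metric Set MeasureTheory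
open scoped ENNReal

noncomputable section

abbrev E2 := EuclideanSpace ℝ (Fin 2)

lemma slab_volume (x0 : E2) (R : ℝ) (u : E2) (hu : u ≠ 0) (cst δ : ℝ) :
    volume {x : E2 | x ∈ ball x0 R ∧ |inner ℝ u x + cst| ≤ δ} ≤
      ENNReal.ofReal (2 * δ / ‖u‖) * ENNReal.ofReal (2 * R) := by
  set ℓ := ‖u‖ with hℓdef
  have hℓ : 0 < ℓ := norm_pos_iff.mpr hu
  set e1 : E2 := ℓ⁻¹ • u with he1def
  have he1 : ‖e1‖ = 1 := by
    rw [he1def, norm_smul, norm_inv, norm_norm]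
    field_simp
  have he1u : ∀ x : E2, (inner ℝ e1 x : ℝ) = ℓ⁻¹ * inner ℝ u x := by
    intro x; rw [he1def, real_inner_smul_left]
  set e2 : E2 := (WithLp.equiv 2 (Fin 2 → ℝ)).symm ![-(e1 1), e1 0] with he2def
  have he2c0 : e2 0 = -(e1 1) := rfl
  have he2c1 : e2 1 = e1 0 := rfl
  have hinner11 : (inner ℝ e1 e1 : ℝ) = 1 := by
    rw [real_inner_self_eq_norm_mul_norm, he1, one_mul]
  have hinner11' : e1 0 * e1 0 + e1 1 * e1 1 = 1 := by
    simpa [PiLp.inner_apply, RCLike.inner_apply, Fin.sum_univ_two, -inner_self_eq_norm_sq_to_K] using hinner11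
  have horth : Orthonormal ℝ ![e1, e2] := by
    rw [orthonormal_iff_ite]
    intro i j
    fin_cases i <;> fin_cases j <;>
      simp [PiLp.inner_apply, RCLike.inner_apply, Fin.sum_univ_two, he2c0, he2c1, -inner_self_eq_norm_sq_to_K] <;>
      nlinarith [hinner11']
  clear_value e2
  clear he2def he2c0 he2c1 hinner11 hinner11' he1
  have hcard : Fintype.card (Fin 2) = Module.finrank ℝ E2 := by
    simp [finrank_euclideanSpace_fin]
  set B := basisOfOrthonormalOfCardEqFinrank horth hcard with hBdef
  have hB : ⇑B = ![e1, e2] := coe_basisOfOrthonormalOfCardEqFinrank horth hcard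
  set OB := B.toOrthonormalBasis (by rwa [hB]) with hOBdef
  have hOB : ⇑OB = ![e1, e2] := by rw [hOBdef, Module.Basis.coe_toOrthonormalBasis, hB]
  set I : Fin 2 → Set ℝ :=
    ![Icc ((-δ - cst) / ℓ) ((δ - cst) / ℓ), Icc ((inner ℝ e2 x0 : ℝ) - R) ((inner ℝ e2 x0 : ℝ) + R)]
    with hIdef
  have hImeas : ∀ i, MeasurableSet (I i) := by
    intro i; fin_cases i <;> simp [hIdef, measurableSet_Icc]
  have hsub : {x : E2 | x ∈ ball x0 R ∧ |inner ℝ u x + cst| ≤ δ} ⊆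
      OB.repr ⁻¹' (((MeasurableEquiv.toLp 2 (Fin 2 → ℝ)).symm) ⁻¹' (univ.pi I)) := by
    rintro x ⟨hxball, hxslab⟩
    simp only [mem_preimage, Set.mem_univ_pi]
    rw [Fin.forall_fin_two]
    have hrepr : ∀ j, ((MeasurableEquiv.toLp 2 (Fin 2 → ℝ)).symm) (OB.repr x) j
        = (inner ℝ (![e1, e2] j) x : ℝ) := by
      intro j
      rw [← hOB]
      exact OB.repr_apply_apply x j
    constructor
    · rw [hrepr 0]
      simp only [Matrix.cons_val_zero, hIdef]
      rw [he1u x]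
      have h1 := abs_le.mp hxslab
      have hc : ℓ⁻¹ * (inner ℝ u x : ℝ) * ℓ = inner ℝ u x := by field_simp
      constructor
      · rw [div_le_iff₀ hℓ, hc]; linarith [h1.1]
      · rw [le_div_iff₀ hℓ, hc]; linarith [h1.2]
    · rw [hrepr 1]
      simp only [Matrix.cons_val_one, Matrix.head_cons, Matrix.cons_val_zero, hIdef]
      have he2n : ‖e2‖ = 1 := by
        have := horth.1 1
        simpa using this
      have hCS : |(inner ℝ e2 x : ℝ) - inner ℝ e2 x0| ≤ R := by
        have heq : (inner ℝ e2 x : ℝ) - inner ℝ e2 x0 = inner ℝ e2 (x - x0) := by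
          rw [inner_sub_right]
        rw [heq]
        calc |(inner ℝ e2 (x - x0) : ℝ)| ≤ ‖e2‖ * ‖x - x0‖ := abs_real_inner_le_norm _ _
          _ = ‖x - x0‖ := by rw [he2n, one_mul]
          _ ≤ R := by
              have := mem_ball_iff_norm.mp hxball
              linarith
      have h2 := abs_le.mp hCS
      constructor <;> [linarith [h2.1]; linarith [h2.2]]
  calc volume {x : E2 | x ∈ ball x0 R ∧ |inner ℝ u x + cst| ≤ δ}
      ≤ volume (OB.repr ⁻¹' (((MeasurableEquiv.toLp 2 (Fin 2 → ℝ)).symm) ⁻¹' (univ.pi I))) :=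
        measure_mono hsub
    _ = volume (((MeasurableEquiv.toLp 2 (Fin 2 → ℝ)).symm) ⁻¹' (univ.pi I)) :=
        OB.measurePreserving_repr.measure_preimage
          ((((MeasurableEquiv.toLp 2 (Fin 2 → ℝ)).symm).measurable
            (MeasurableSet.univ_pi hImeas)).nullMeasurableSet)
    _ = volume (univ.pi I) :=
        (EuclideanSpace.volume_preserving_symm_measurableEquiv_toLp (Fin 2)).measure_preimage
          ((MeasurableSet.univ_pi hImeas).nullMeasurableSet)
    _ = ∏ i, volume (I i) := volume_pi_pi I
    _ ≤ ENNReal.ofReal (2 * δ / ℓ) * ENNReal.ofReal (2 * R) := by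
        rw [Fin.prod_univ_two]
        simp only [hIdef, Matrix.cons_val_zero, Matrix.cons_val_one, Matrix.head_cons,
          Real.volume_Icc]
        apply mul_le_mul'
        · apply ENNReal.ofReal_le_ofReal
          rw [show (δ - cst) / ℓ - (-δ - cst) / ℓ = 2 * δ / ℓ by field_simp; ring]
        · apply ENNReal.ofReal_le_ofReal; linarith


lemma E2_volume_ball (x0 : E2) (R : ℝ) (hR : 0 ≤ R) :
    volume (ball x0 R) = ENNReal.ofReal (Real.pi * R ^ 2) := by
  rw [EuclideanSpace.volume_ball, Fintype.card_fin]
  rw [show ((2:ℕ) : ℝ) / 2 + 1 = 2 by norm_num, Real.Gamma_two,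
    show Real.sqrt Real.pi ^ (2:ℕ) / 1 = Real.pi by
      rw [div_one, Real.sq_sqrt Real.pi_nonneg],
    ← ENNReal.ofReal_pow hR, ← ENNReal.ofReal_mul (by positivity), mul_comm]

set_option maxHeartbeats 1000000 in
/-- `L^p`-bounds for affine maps on a ball in terms of their `L^p`-norm on a subset of
proportional measure: `‖a‖_{L^p(B(x0,R))} ≤ (√π R)^{2/p} ‖a‖_{L^∞(B(x0,R))} ≤ c ‖a‖_{L^p(U)}`
and `|A| ≤ c R^{-(2/p+1)} ‖a‖_{L^p(U)}`, with `c` depending only on `θ` and `p`. -/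
theorem rigid_motion_lp_bounds (θ p : ℝ) (hθ : 0 < θ) (hp : 1 ≤ p) :
    ∃ c : ℝ, 0 < c ∧
      ∀ (x0 : E2) (R : ℝ) (A : E2 →L[ℝ] E2) (b : E2) (U : Set E2),
        0 < R → U ⊆ ball x0 R → MeasurableSet U →
        ENNReal.ofReal θ * volume (ball x0 R) ≤ volume U →
        eLpNorm (fun x => A x + b) (ENNReal.ofReal p) (volume.restrict (ball x0 R)) ≤
            ENNReal.ofReal ((Real.sqrt Real.pi * R) ^ (2 / p)) *
              eLpNorm (fun x => A x + b) ⊤ (volume.restrict (ball x0 R)) ∧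
        ENNReal.ofReal ((Real.sqrt Real.pi * R) ^ (2 / p)) *
            eLpNorm (fun x => A x + b) ⊤ (volume.restrict (ball x0 R)) ≤
          ENNReal.ofReal c *
            eLpNorm (fun x => A x + b) (ENNReal.ofReal p) (volume.restrict U) ∧
        ENNReal.ofReal ‖A‖ ≤
          ENNReal.ofReal (c * R ^ (-(2 / p + 1))) *
            eLpNorm (fun x => A x + b) (ENNReal.ofReal p) (volume.restrict U) := by
  have hp0 : 0 < p := lt_of_lt_of_le one_pos hp
  set ε : ℝ := min (1/2) (θ * Real.pi / 32) with hεdef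
  have hε : 0 < ε := lt_min (by norm_num) (by positivity)
  have hε2 : ε ≤ 1/2 := min_le_left _ _
  have hε3 : 16 * ε ≤ θ * Real.pi / 2 := by
    have := min_le_right (1/2 : ℝ) (θ * Real.pi / 32)
    nlinarith
  set c : ℝ := 4 * ε⁻¹ * (2/θ) ^ (1/p) with hcdef
  have hc : 0 < c := by positivity
  refine ⟨c, hc, ?_⟩
  intro x0 R A b U hR hUsub hUmeas hUvol
  set f : E2 → E2 := fun x => A x + b with hfdef
  have hf_cont : Continuous f := A.continuous.add continuous_const
  set P : ENNReal := ENNReal.ofReal p with hPdef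
  have hP0 : P ≠ 0 := by
    simp only [hPdef, ne_eq, ENNReal.ofReal_eq_zero, not_le]; linarith
  have hPtop : P ≠ ⊤ := ENNReal.ofReal_ne_top
  have hPtoReal : P.toReal = p := ENNReal.toReal_ofReal hp0.le
  -- maximum of ‖f‖ on the closed ball
  obtain ⟨xs, hxs_mem, hxs_max'⟩ :=
    (isCompact_closedBall x0 R).exists_isMaxOn (nonempty_closedBall.mpr hR.le)
      hf_cont.norm.continuousOn
  have hxs_max : ∀ y ∈ closedBall x0 R, ‖f y‖ ≤ ‖f xs‖ := fun y hy => hxs_max' hy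
  set M : ℝ := ‖f xs‖ with hMdef
  have hM0 : 0 ≤ M := norm_nonneg _
  have hMmax : ∀ y ∈ closedBall x0 R, ‖f y‖ ≤ M := hxs_max
  have hball : volume (ball x0 R) = ENNReal.ofReal (Real.pi * R ^ 2) :=
    E2_volume_ball x0 R hR.le
  -- part 1, always valid
  have part1 : eLpNorm f P (volume.restrict (ball x0 R)) ≤
      ENNReal.ofReal ((Real.sqrt Real.pi * R) ^ (2 / p)) *
        eLpNorm f ⊤ (volume.restrict (ball x0 R)) := by
    have h := eLpNorm_le_eLpNorm_mul_rpow_measure_univ (p := P) (q := ⊤)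
      le_top (hf_cont.aestronglyMeasurable (μ := volume.restrict (ball x0 R)))
    rw [Measure.restrict_apply_univ] at h
    have hexp : 1 / P.toReal - 1 / (⊤ : ℝ≥0∞).toReal = 1 / p := by
      simp [hPtoReal]
    rw [hexp, hball] at h
    refine h.trans (le_of_eq ?_)
    rw [mul_comm]
    congr 1
    rw [ENNReal.ofReal_rpow_of_nonneg (by positivity) (by positivity)]
    congr 1
    rw [show Real.pi * R ^ 2 = (Real.sqrt Real.pi * R) ^ (2:ℕ) by
          rw [mul_pow, Real.sq_sqrt Real.pi_nonneg],
      ← Real.rpow_natCast (Real.sqrt Real.pi * R) 2, ← Real.rpow_mul (by positivity)]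
    norm_num [div_eq_mul_inv]
  by_cases hM : M = 0
  · -- f vanishes on the closed ball
    have hf0 : ∀ y ∈ closedBall x0 R, f y = 0 := fun y hy =>
      norm_le_zero_iff.mp (hM ▸ hMmax y hy)
    have h0ae : f =ᵐ[volume.restrict (ball x0 R)] 0 :=
      (ae_restrict_iff' measurableSet_ball).mpr
        (ae_of_all _ fun x hx => hf0 x (ball_subset_closedBall hx))
    have htop0 : eLpNorm f ⊤ (volume.restrict (ball x0 R)) = 0 := by
      rw [eLpNorm_congr_ae h0ae, eLpNorm_zero]
    have hA0 : ‖A‖ ≤ 0 := by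
      apply ContinuousLinearMap.opNorm_le_of_ball hR le_rfl
      intro x hx
      have hx' : ‖x‖ < R := mem_ball_zero_iff.mp hx
      have hmem1 : x0 + x ∈ closedBall x0 R := by
        rw [mem_closedBall, dist_eq_norm, add_sub_cancel_left]
        exact hx'.le
      have hAx : A x = f (x0 + x) - f x0 := by
        simp only [hfdef, map_add]; abel
      rw [hAx, hf0 _ hmem1, hf0 _ (mem_closedBall_self hR.le), sub_zero, norm_zero]
      positivity
    refine ⟨?_, ?_, ?_⟩
    · rw [eLpNorm_congr_ae h0ae, eLpNorm_zero]; exact zero_le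
    · rw [htop0, mul_zero]; exact zero_le
    · rw [ENNReal.ofReal_eq_zero.mpr hA0]; exact zero_le
  have hMpos : 0 < M := lt_of_le_of_ne hM0 (Ne.symm hM)
  -- the small set
  set S : Set E2 := {x | x ∈ ball x0 R ∧ ‖f x‖ ≤ ε * M} with hSdef
  have hSvol : volume S ≤ ENNReal.ofReal (θ * Real.pi * R ^ 2 / 2) := by
    rcases S.eq_empty_or_nonempty with hSe | ⟨x1, hx1ball, hx1⟩
    · rw [hSe, measure_empty]; exact zero_le
    · set v : E2 := M⁻¹ • f xs with hvdef
      have hv : ‖v‖ = 1 := by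
        rw [hvdef, norm_smul, norm_inv, Real.norm_eq_abs, abs_of_pos hMpos, ← hMdef]
        field_simp
      set u : E2 := (ContinuousLinearMap.adjoint A) v with hudef
      set cst : ℝ := inner ℝ b v with hcstdef
      have hg : ∀ x : E2, (inner ℝ u x : ℝ) + cst = inner ℝ (f x) v := by
        intro x
        rw [hudef, ContinuousLinearMap.adjoint_inner_left, hfdef]
        rw [inner_add_left, real_inner_comm v (A x), hcstdef]
      have hgs : (inner ℝ (f xs) v : ℝ) = M := by
        rw [hvdef, real_inner_smul_right, real_inner_self_eq_norm_mul_norm, ← hMdef]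
        field_simp
      have hx1v : (inner ℝ (f x1) v : ℝ) ≤ ε * M := by
        calc (inner ℝ (f x1) v : ℝ) ≤ |(inner ℝ (f x1) v : ℝ)| := le_abs_self _
          _ ≤ ‖f x1‖ * ‖v‖ := abs_real_inner_le_norm _ _
          _ = ‖f x1‖ := by rw [hv, mul_one]
          _ ≤ ε * M := hx1
      have hdist : ‖xs - x1‖ ≤ 2 * R := by
        have h1 : dist xs x0 ≤ R := mem_closedBall.mp hxs_mem
        have h2 : dist x1 x0 < R := mem_ball.mp hx1ball
        calc ‖xs - x1‖ = dist xs x1 := (dist_eq_norm _ _).symm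
          _ ≤ dist xs x0 + dist x0 x1 := dist_triangle _ _ _
          _ ≤ R + R := add_le_add h1 (le_of_lt (by rwa [dist_comm] at h2))
          _ = 2 * R := by ring
      have hlow : M * (1 - ε) ≤ ‖u‖ * (2 * R) := by
        have h1 : M - ε * M ≤ (inner ℝ u (xs - x1) : ℝ) := by
          rw [inner_sub_right]
          have e1 : (inner ℝ u xs : ℝ) = M - cst := by
            have := hg xs; rw [hgs] at this; linarith
          have e2 : (inner ℝ u x1 : ℝ) ≤ ε * M - cst := by
            have := hg x1; linarith [hx1v]
          linarith
        have h2 : (inner ℝ u (xs - x1) : ℝ) ≤ ‖u‖ * ‖xs - x1‖ := real_inner_le_norm _ _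
        have h3 : ‖u‖ * ‖xs - x1‖ ≤ ‖u‖ * (2 * R) :=
          mul_le_mul_of_nonneg_left hdist (norm_nonneg _)
        linarith
      have h1 : M * (1/2) ≤ M * (1 - ε) :=
        mul_le_mul_of_nonneg_left (by linarith) hM0
      have hupos : 0 < ‖u‖ := by
        rcases (norm_nonneg u).lt_or_eq with h | h
        · exact h
        · exfalso
          rw [← h, zero_mul] at hlow
          linarith
      have hu4 : M ≤ 4 * R * ‖u‖ := by
        have h2 : M * (1/2) ≤ ‖u‖ * (2 * R) := le_trans h1 hlow
        have h3 : ‖u‖ * (2 * R) * 2 = 4 * R * ‖u‖ := by ring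
        linarith
      have husub : S ⊆ {x : E2 | x ∈ ball x0 R ∧ |(inner ℝ u x : ℝ) + cst| ≤ ε * M} := by
        rintro x ⟨hxb, hxf⟩
        refine ⟨hxb, ?_⟩
        rw [hg x]
        calc |(inner ℝ (f x) v : ℝ)| ≤ ‖f x‖ * ‖v‖ := abs_real_inner_le_norm _ _
          _ = ‖f x‖ := by rw [hv, mul_one]
          _ ≤ ε * M := hxf
      calc volume S
          ≤ volume {x : E2 | x ∈ ball x0 R ∧ |(inner ℝ u x : ℝ) + cst| ≤ ε * M} :=
            measure_mono husub
        _ ≤ ENNReal.ofReal (2 * (ε * M) / ‖u‖) * ENNReal.ofReal (2 * R) :=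
            slab_volume x0 R u (norm_pos_iff.mp hupos) cst (ε * M)
        _ ≤ ENNReal.ofReal (8 * ε * R) * ENNReal.ofReal (2 * R) := by
            refine mul_le_mul' (ENNReal.ofReal_le_ofReal ?_) le_rfl
            rw [div_le_iff₀ hupos]
            linarith [mul_le_mul_of_nonneg_left hu4 (show (0:ℝ) ≤ 2 * ε by positivity)]
        _ = ENNReal.ofReal (16 * ε * R ^ 2) := by
            rw [← ENNReal.ofReal_mul (by positivity)]; ring_nf
        _ ≤ ENNReal.ofReal (θ * Real.pi * R ^ 2 / 2) := by
            apply ENNReal.ofReal_le_ofReal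
            linarith [mul_le_mul_of_nonneg_right hε3 (sq_nonneg R)]
  -- lower bound for the measure of the good part of U
  set G : Set E2 := ball x0 R ∩ {x | ε * M < ‖f x‖} with hGdef
  have hGmeas : MeasurableSet G :=
    measurableSet_ball.inter ((isOpen_lt continuous_const hf_cont.norm).measurableSet)
  have hUG : ENNReal.ofReal (θ * Real.pi * R ^ 2 / 2) ≤ volume (U ∩ G) := by
    have h1 : ENNReal.ofReal (θ * (Real.pi * R ^ 2)) ≤ volume U := by
      rw [ENNReal.ofReal_mul hθ.le, ← hball]; exact hUvol
    have hsplit : U ⊆ (U ∩ G) ∪ S := by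
      intro x hx
      rcases le_or_gt ‖f x‖ (ε * M) with h | h
      · exact Or.inr ⟨hUsub hx, h⟩
      · exact Or.inl ⟨hx, hUsub hx, h⟩
    have h2 : volume U ≤ volume (U ∩ G) + volume S :=
      (measure_mono hsplit).trans (measure_union_le _ _)
    have h3 : ENNReal.ofReal (θ * Real.pi * R ^ 2 / 2) +
        ENNReal.ofReal (θ * Real.pi * R ^ 2 / 2) ≤
        volume (U ∩ G) + ENNReal.ofReal (θ * Real.pi * R ^ 2 / 2) := by
      calc ENNReal.ofReal (θ * Real.pi * R ^ 2 / 2) +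
            ENNReal.ofReal (θ * Real.pi * R ^ 2 / 2)
          = ENNReal.ofReal (θ * (Real.pi * R ^ 2)) := by
            rw [← ENNReal.ofReal_add (by positivity) (by positivity)]; ring_nf
        _ ≤ volume U := h1
        _ ≤ volume (U ∩ G) + volume S := h2
        _ ≤ volume (U ∩ G) + ENNReal.ofReal (θ * Real.pi * R ^ 2 / 2) :=
            add_le_add le_rfl hSvol
    exact (ENNReal.add_le_add_iff_right ENNReal.ofReal_ne_top).mp h3
  -- key lower bound for the Lp norm on U
  have key : ENNReal.ofReal (ε * M) * ENNReal.ofReal (θ * Real.pi * R ^ 2 / 2) ^ (1/p) ≤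
      eLpNorm f P (volume.restrict U) := by
    have hmeas : MeasurableSet (U ∩ G) := hUmeas.inter hGmeas
    have hlow : ENNReal.ofReal (ε * M) * ENNReal.ofReal (θ * Real.pi * R ^ 2 / 2) ^ (1/p) ≤
        eLpNorm f P (volume.restrict (U ∩ G)) := by
      rw [eLpNorm_eq_lintegral_rpow_enorm_toReal hP0 hPtop, hPtoReal]; simp only [enorm_eq_nnnorm]
      have hpt : ∀ x ∈ U ∩ G, ENNReal.ofReal (ε * M) ^ p ≤ (‖f x‖₊ : ℝ≥0∞) ^ p := by
        intro x hx
        apply ENNReal.rpow_le_rpow _ hp0.le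
        rw [← enorm_eq_nnnorm, ← ofReal_norm]
        exact ENNReal.ofReal_le_ofReal hx.2.2.le
      have hint : ENNReal.ofReal (ε * M) ^ p * volume (U ∩ G) ≤
          ∫⁻ x in U ∩ G, (‖f x‖₊ : ℝ≥0∞) ^ p ∂volume := by
        rw [← setLIntegral_const]
        exact setLIntegral_mono' hmeas hpt
      calc ENNReal.ofReal (ε * M) * ENNReal.ofReal (θ * Real.pi * R ^ 2 / 2) ^ (1/p)
          = (ENNReal.ofReal (ε * M) ^ p *
              ENNReal.ofReal (θ * Real.pi * R ^ 2 / 2)) ^ (1/p) := by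
            rw [ENNReal.mul_rpow_of_nonneg _ _ (by positivity), ← ENNReal.rpow_mul,
              mul_one_div_cancel hp0.ne', ENNReal.rpow_one]
        _ ≤ (ENNReal.ofReal (ε * M) ^ p * volume (U ∩ G)) ^ (1/p) :=
            ENNReal.rpow_le_rpow (mul_le_mul_right hUG _) (by positivity)
        _ ≤ (∫⁻ x in U ∩ G, (‖f x‖₊ : ℝ≥0∞) ^ p ∂volume) ^ (1/p) :=
            ENNReal.rpow_le_rpow hint (by positivity)
    exact hlow.trans (eLpNorm_mono_measure f (Measure.restrict_mono inter_subset_left le_rfl))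
  have hMtop : eLpNorm f ⊤ (volume.restrict (ball x0 R)) ≤ ENNReal.ofReal M := by
    rw [eLpNorm_exponent_top]
    exact eLpNormEssSup_le_of_ae_bound ((ae_restrict_iff' measurableSet_ball).mpr
      (ae_of_all _ fun x hx => hMmax x (ball_subset_closedBall hx)))
  -- main real computation
  have hreq2 : c * (ε * M * (θ * Real.pi * R ^ 2 / 2) ^ (1/p)) =
      4 * M * (Real.pi * R ^ 2) ^ (1/p) := by
    rw [hcdef]
    rw [show (4 * ε⁻¹ * (2/θ) ^ (1/p)) * (ε * M * (θ * Real.pi * R ^ 2 / 2) ^ (1/p))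
        = 4 * (ε⁻¹ * ε) * M * ((2/θ) ^ (1/p) * (θ * Real.pi * R ^ 2 / 2) ^ (1/p)) by ring,
      inv_mul_cancel₀ hε.ne', ← Real.mul_rpow (by positivity) (by positivity)]
    rw [show (2/θ) * (θ * Real.pi * R ^ 2 / 2) = Real.pi * R ^ 2 by
      field_simp]
    ring
  have hreq1 : (Real.sqrt Real.pi * R) ^ (2 / p) = (Real.pi * R ^ 2) ^ (1/p) := by
    rw [show Real.pi * R ^ 2 = (Real.sqrt Real.pi * R) ^ (2:ℕ) by
          rw [mul_pow, Real.sq_sqrt Real.pi_nonneg],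
      ← Real.rpow_natCast (Real.sqrt Real.pi * R) 2, ← Real.rpow_mul (by positivity)]
    norm_num [div_eq_mul_inv]
  refine ⟨part1, ?_, ?_⟩
  · -- part 2
    calc ENNReal.ofReal ((Real.sqrt Real.pi * R) ^ (2 / p)) *
          eLpNorm f ⊤ (volume.restrict (ball x0 R))
        ≤ ENNReal.ofReal ((Real.sqrt Real.pi * R) ^ (2 / p)) * ENNReal.ofReal M :=
          mul_le_mul_right hMtop _
      _ = ENNReal.ofReal ((Real.pi * R ^ 2) ^ (1/p) * M) := by
          rw [← ENNReal.ofReal_mul (by positivity), hreq1]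
      _ ≤ ENNReal.ofReal (c * (ε * M * (θ * Real.pi * R ^ 2 / 2) ^ (1/p))) := by
          apply ENNReal.ofReal_le_ofReal
          rw [hreq2]
          nlinarith [Real.rpow_nonneg (show (0:ℝ) ≤ Real.pi * R ^ 2 by positivity) (1/p)]
      _ = ENNReal.ofReal c * (ENNReal.ofReal (ε * M) *
            ENNReal.ofReal (θ * Real.pi * R ^ 2 / 2) ^ (1/p)) := by
          rw [ENNReal.ofReal_rpow_of_nonneg (by positivity) (by positivity),
            ← ENNReal.ofReal_mul (by positivity), ← ENNReal.ofReal_mul hc.le, mul_assoc]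
      _ ≤ ENNReal.ofReal c * eLpNorm f P (volume.restrict U) := mul_le_mul_right key _
  · -- part 3
    have hA4 : ‖A‖ ≤ 4 * M / R := by
      apply ContinuousLinearMap.opNorm_le_of_shell (ε := R) hR (by positivity) (c := (2:ℝ))
        (by rw [Real.norm_ofNat]; norm_num)
      intro x hx1 hx2
      have hx1' : R / 2 ≤ ‖x‖ := by rwa [Real.norm_ofNat] at hx1
      have hmem1 : x0 + x ∈ closedBall x0 R := by
        rw [mem_closedBall, dist_eq_norm, add_sub_cancel_left]; exact hx2.le
      have hAx : A x = f (x0 + x) - f x0 := by simp only [hfdef, map_add]; abel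
      have h2M : ‖A x‖ ≤ 2 * M := by
        rw [hAx]
        calc ‖f (x0 + x) - f x0‖ ≤ ‖f (x0 + x)‖ + ‖f x0‖ := norm_sub_le _ _
          _ ≤ M + M := add_le_add (hMmax _ hmem1) (hMmax _ (mem_closedBall_self hR.le))
          _ = 2 * M := by ring
      have heq : 4 * M / R * (R / 2) = 2 * M := by field_simp; ring
      calc ‖A x‖ ≤ 2 * M := h2M
        _ = 4 * M / R * (R / 2) := heq.symm
        _ ≤ 4 * M / R * ‖x‖ := mul_le_mul_of_nonneg_left hx1' (by positivity)
    have hreq3 : 4 * M / R ≤ c * R ^ (-(2 / p + 1)) *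
        (ε * M * (θ * Real.pi * R ^ 2 / 2) ^ (1/p)) := by
      have hπ : (1:ℝ) ≤ Real.pi ^ (1/p) :=
        Real.one_le_rpow (by linarith [Real.pi_gt_three]) (by positivity)
      have hsplit : (Real.pi * R ^ 2) ^ (1/p) = Real.pi ^ (1/p) * R ^ (2/p) := by
        rw [Real.mul_rpow Real.pi_nonneg (by positivity)]
        congr 1
        rw [← Real.rpow_natCast R 2, ← Real.rpow_mul hR.le]
        norm_num [div_eq_mul_inv]
      have hRpow : R ^ (-(2 / p + 1)) * R ^ (2/p) = R⁻¹ := by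
        rw [← Real.rpow_add hR, show -(2 / p + 1) + 2/p = -1 by ring, Real.rpow_neg_one]
      calc 4 * M / R = 1 * (4 * M * R⁻¹) := by rw [one_mul, div_eq_mul_inv]
        _ ≤ Real.pi ^ (1/p) * (4 * M * R⁻¹) :=
            mul_le_mul_of_nonneg_right hπ (by positivity)
        _ = c * R ^ (-(2 / p + 1)) * (ε * M * (θ * Real.pi * R ^ 2 / 2) ^ (1/p)) := by
            rw [show c * R ^ (-(2 / p + 1)) * (ε * M * (θ * Real.pi * R ^ 2 / 2) ^ (1/p))
                = R ^ (-(2 / p + 1)) * (c * (ε * M * (θ * Real.pi * R ^ 2 / 2) ^ (1/p))) by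
                  ring,
              hreq2, hsplit,
              show R ^ (-(2 / p + 1)) * (4 * M * (Real.pi ^ (1/p) * R ^ (2/p)))
                = Real.pi ^ (1/p) * (4 * M) * (R ^ (-(2 / p + 1)) * R ^ (2/p)) by ring,
              hRpow]
            ring
    calc ENNReal.ofReal ‖A‖ ≤ ENNReal.ofReal (c * R ^ (-(2 / p + 1)) *
          (ε * M * (θ * Real.pi * R ^ 2 / 2) ^ (1/p))) :=
        ENNReal.ofReal_le_ofReal ((hA4.trans hreq3))
      _ = ENNReal.ofReal (c * R ^ (-(2 / p + 1))) * (ENNReal.ofReal (ε * M) *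
            ENNReal.ofReal (θ * Real.pi * R ^ 2 / 2) ^ (1/p)) := by
          rw [ENNReal.ofReal_rpow_of_nonneg (by positivity) (by positivity),
            ← ENNReal.ofReal_mul (by positivity), ← ENNReal.ofReal_mul (by positivity)]
      _ ≤ ENNReal.ofReal (c * R ^ (-(2 / p + 1))) * eLpNorm f P (volume.restrict U) :=
          mul_le_mul_right key _
end
end

section
/- Let K be a relatively closed subset of B(x0,r0) that separates B(x0,r0) (i.e., β_K(x0,r0) ≤ 1/2 and the two regions D⁺ and D⁻ of points at distance > β_K(x0,r0)·r0 above/below an optimal approximating line lie in distinct connected components of B(x0,r0)\K). Then the bilateral flatness satisfies β^bil_K(x0,r0) ≤ 4 β_K(x0,r0). -/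
open Metric Set MeasureTheory
open scoped RealInnerProductSpace

noncomputable section

/-- The affine line through `x` with direction `v`. -/
def lineThrough (x v : E2) : Set E2 := {p | ∃ t : ℝ, p = x + t • v}

/-- The (unilateral) flatness `β_K(x0, r0)`: the infimum of all `ε ≥ 0` such that
`K ∩ B(x0,r0)` is contained in a strip of half-width `ε · r0` around some line through `x0`. -/
noncomputable def flatness (K : Set E2) (x0 : E2) (r0 : ℝ) : ℝ :=
  sInf {ε : ℝ | 0 ≤ ε ∧ ∃ v : E2, v ≠ 0 ∧
    ∀ y ∈ K ∩ ball x0 r0, infDist y (lineThrough x0 v) ≤ ε * r0}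

/-- The bilateral flatness `β^bil_K(x0, r0)`: the infimum of all `ε ≥ 0` such that for some
line through `x0`, `K ∩ B(x0,r0)` is `ε r0`-close to the line and conversely each point of the
line in the ball is `ε r0`-close to `K`. -/
noncomputable def bilFlatness (K : Set E2) (x0 : E2) (r0 : ℝ) : ℝ :=
  sInf {ε : ℝ | 0 ≤ ε ∧ ∃ v : E2, v ≠ 0 ∧
    (∀ y ∈ K ∩ ball x0 r0, infDist y (lineThrough x0 v) ≤ ε * r0) ∧
    (∀ y ∈ lineThrough x0 v ∩ ball x0 r0, infDist y K ≤ ε * r0)}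

/-- `K` separates `B(x0,r0)`: the flatness is at most `1/2` and, for some unit normal `ν` of an
optimal approximating line, the two regions `D^±` of points of the ball lying at (signed) distance
more than `β_K(x0,r0)·r0` from the line on each side cannot be joined by a connected subset of
`B(x0,r0) \ K`, i.e. they lie in distinct connected components of `B(x0,r0) \ K`. -/
def Separates (K : Set E2) (x0 : E2) (r0 : ℝ) : Prop :=
  flatness K x0 r0 ≤ 1 / 2 ∧
  ∃ ν : E2, ‖ν‖ = 1 ∧
    (∀ y ∈ K ∩ ball x0 r0, |(inner ℝ (y - x0) ν : ℝ)| ≤ flatness K x0 r0 * r0) ∧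
    ∀ C : Set E2, IsConnected C → C ⊆ ball x0 r0 \ K →
      ¬ ((∃ p ∈ C, flatness K x0 r0 * r0 < (inner ℝ (p - x0) ν : ℝ)) ∧
         (∃ q ∈ C, (inner ℝ (q - x0) ν : ℝ) < -(flatness K x0 r0 * r0)))

/-- `A` is relatively closed in `B`. -/
def RelClosedIn (A B : Set E2) : Prop := A ⊆ B ∧ closure A ∩ B ⊆ A

set_option maxHeartbeats 1600000 in
/-- For a separating set, the bilateral flatness is controlled by the unilateral flatness:
`β^bil_K(x0,r0) ≤ 4 β_K(x0,r0)`. -/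
theorem bilFlatness_le_of_separates (K : Set E2) (x0 : E2) (r0 : ℝ)
    (hr0 : 0 < r0) (hK : RelClosedIn K (ball x0 r0))
    (hsep : Separates K x0 r0) :
    bilFlatness K x0 r0 ≤ 4 * flatness K x0 r0 := by
  obtain ⟨hβhalf, ν, hν, hKstrip, hsepC⟩ := hsep
  set β := flatness K x0 r0 with hβdef
  have hβ0 : 0 ≤ β := Real.sInf_nonneg fun x hx => hx.1
  set b := β * r0 with hbdef
  have hb0 : 0 ≤ b := mul_nonneg hβ0 hr0.le
  have hbr : b ≤ r0 / 2 := by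
    rw [hbdef]; linarith only [mul_le_mul_of_nonneg_right hβhalf hr0.le]
  have hinner : ∀ w u : E2, ⟪w, u⟫ = w 0 * u 0 + w 1 * u 1 := by
    intro w u
    simp [PiLp.inner_apply, Fin.sum_univ_two, RCLike.inner_apply]
    ring
  have hν2 : ν 0 * ν 0 + ν 1 * ν 1 = 1 := by
    have h1 : ⟪ν, ν⟫ = 1 := by
      rw [real_inner_self_eq_norm_sq, hν]; norm_num
    rw [hinner] at h1; exact h1
  have hνν : ⟪ν, ν⟫ = 1 := by rw [hinner]; exact hν2
  set v : E2 := (show E2 from WithLp.toLp 2 (fun i : Fin 2 => if i = 0 then -(ν 1) else ν 0)) with hvdef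
  have hv0 : v 0 = -(ν 1) := rfl
  have hv1 : v 1 = ν 0 := rfl
  have hvν : ⟪v, ν⟫ = 0 := by rw [hinner, hv0, hv1]; ring
  have hvne : v ≠ 0 := by
    intro h
    have h0 : ν 1 = 0 := by
      have h' := congrArg (fun w : E2 => w 0) h
      simp only [hv0] at h'
      simpa using h'
    have h1 : ν 0 = 0 := by
      have h' := congrArg (fun w : E2 => w 1) h
      simp only [hv1] at h'
      simpa using h'
    rw [h0, h1] at hν2; norm_num at hν2
  have hdecomp : ∀ w : E2, w - ⟪w, v⟫ • v = ⟪w, ν⟫ • ν := by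
    intro w
    ext i
    fin_cases i
    · simp only [Fin.mk_zero, Fin.mk_one, PiLp.sub_apply, PiLp.smul_apply, smul_eq_mul,
        hinner, hv0, hv1]
      linear_combination (-(w 0)) * hν2
    · simp only [Fin.mk_zero, Fin.mk_one, PiLp.sub_apply, PiLp.smul_apply, smul_eq_mul,
        hinner, hv0, hv1]
      linear_combination (-(w 1)) * hν2
  have hline : ∀ y : E2, infDist y (lineThrough x0 v) ≤ |⟪y - x0, ν⟫| := by
    intro y
    have hmem : x0 + ⟪y - x0, v⟫ • v ∈ lineThrough x0 v := ⟨_, rfl⟩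
    calc infDist y (lineThrough x0 v) ≤ dist y (x0 + ⟪y - x0, v⟫ • v) :=
          infDist_le_dist_of_mem hmem
      _ = ‖(y - x0) - ⟪y - x0, v⟫ • v‖ := by rw [dist_eq_norm]; congr 1; abel
      _ = ‖⟪y - x0, ν⟫ • ν‖ := by rw [hdecomp]
      _ = |⟪y - x0, ν⟫| := by rw [norm_smul, hν, Real.norm_eq_abs, mul_one]
  have hmain : ∀ y ∈ lineThrough x0 v ∩ ball x0 r0, infDist y K ≤ 4 * β * r0 := by
    rintro y ⟨⟨s, hys⟩, hyb⟩
    by_contra hcon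
    push_neg at hcon
    set d := infDist y K with hddef
    have hd4 : 4 * b < d := by rw [hbdef, ← mul_assoc]; exact hcon
    have hyν : ⟪y - x0, ν⟫ = 0 := by
      rw [hys, add_sub_cancel_left, real_inner_smul_left, hvν, mul_zero]
    set a := ‖y - x0‖ with hadef
    have ha0 : 0 ≤ a := norm_nonneg _
    have har : a < r0 := by rwa [mem_ball, dist_eq_norm] at hyb
    obtain ⟨c, hc0, hc1, hyz3b, hz1⟩ :
        ∃ c : ℝ, 0 ≤ c ∧ c ≤ 1 ∧ (1 - c) * a ≤ 3 * b ∧ (c * a) ^ 2 + b ^ 2 < r0 ^ 2 := by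
      rcases le_or_gt a (3 * b) with h | h
      · exact ⟨0, le_refl 0, by norm_num, by linarith, by nlinarith [hb0, hbr, hr0]⟩
      · have hapos : 0 < a := lt_of_le_of_lt (by positivity) h
        have hca : (1 - 3 * b / a) * a = a - 3 * b := by field_simp
        have hba : 3 * b / a ≤ 1 := by rw [div_le_one hapos]; linarith
        have hba0 : 0 ≤ 3 * b / a := by positivity
        refine ⟨1 - 3 * b / a, by linarith, by linarith, ?_, ?_⟩
        · have h2 : (1 - (1 - 3 * b / a)) * a = 3 * b := by field_simp; ring
          linarith [h2.le]
        · rw [hca]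
          nlinarith [mul_pos (sub_pos.2 har) (show (0:ℝ) < r0 + a - 6 * b by linarith),
            mul_nonneg hb0 (show (0:ℝ) ≤ 3 * r0 - 5 * b by linarith)]
    set z : E2 := x0 + c • (y - x0) with hzdef
    have hzx : ‖z - x0‖ = c * a := by
      rw [hzdef, add_sub_cancel_left, norm_smul, Real.norm_eq_abs, abs_of_nonneg hc0]
    have hzν : ⟪z - x0, ν⟫ = 0 := by
      rw [hzdef, add_sub_cancel_left, real_inner_smul_left, hyν, mul_zero]
    have hyz : dist y z = (1 - c) * a := by
      rw [dist_eq_norm]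
      have hvec : y - z = (1 - c) • (y - x0) := by rw [hzdef]; module
      rw [hvec, norm_smul, Real.norm_eq_abs, abs_of_nonneg (by linarith)]
    set S := Real.sqrt (r0 ^ 2 - (c * a) ^ 2) with hSdef
    have hbS : b < S := by
      rw [hSdef]
      exact Real.lt_sqrt_of_sq_lt (by linarith only [hz1])
    set t := (b + min (d - 3 * b) S) / 2 with htdef
    have hmgt : b < min (d - 3 * b) S := lt_min (by linarith only [hd4, hb0]) hbS
    have hbt : b < t := by rw [htdef]; linarith only [hmgt]
    have ht0 : 0 ≤ t := le_of_lt (lt_of_le_of_lt hb0 hbt)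
    have htmin : t < min (d - 3 * b) S := by rw [htdef]; linarith only [hmgt]
    have htd : t < d - 3 * b := lt_of_lt_of_le htmin (min_le_left _ _)
    have htS : t < S := lt_of_lt_of_le htmin (min_le_right _ _)
    have ht2 : (c * a) ^ 2 + t ^ 2 < r0 ^ 2 := by
      have hS2 : S ^ 2 = r0 ^ 2 - (c * a) ^ 2 :=
        Real.sq_sqrt (by linarith only [hz1, sq_nonneg b])
      have htS2 : t ^ 2 < S ^ 2 :=
        sq_lt_sq' (by linarith only [ht0, htS]) htS
      linarith only [hS2, htS2]
    set p := z + t • ν with hpdef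
    set q := z - t • ν with hqdef
    set C := segment ℝ q p with hCdef
    have hCconn : IsConnected C := (convex_segment q p).isConnected ⟨q, left_mem_segment ℝ q p⟩
    have hCrep : ∀ w ∈ C, ∃ u : ℝ, |u| ≤ t ∧ w - x0 = (z - x0) + u • ν := by
      intro w hw
      rw [hCdef, segment_eq_image] at hw
      obtain ⟨θ, hθ, hwθ⟩ := hw
      refine ⟨(2 * θ - 1) * t, ?_, ?_⟩
      · rw [abs_mul, abs_of_nonneg ht0]
        have habs : |2 * θ - 1| ≤ 1 :=
          abs_le.2 ⟨by linarith only [hθ.1], by linarith only [hθ.2]⟩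
        exact mul_le_of_le_one_left ht0 habs
      · rw [← hwθ, hpdef, hqdef]; module
    have hCsub : C ⊆ ball x0 r0 \ K := by
      intro w hw
      obtain ⟨u, hu, hwu⟩ := hCrep w hw
      have hu2 : u ^ 2 ≤ t ^ 2 := by
        have := pow_le_pow_left₀ (abs_nonneg u) hu 2
        rwa [sq_abs] at this
      have hnorm : ‖w - x0‖ ^ 2 = (c * a) ^ 2 + u ^ 2 := by
        rw [hwu, norm_add_sq_real, real_inner_smul_right, hzν, norm_smul, hν, hzx]
        simp [Real.norm_eq_abs, sq_abs]
        try ring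
      have hwball : w ∈ ball x0 r0 := by
        rw [mem_ball, dist_eq_norm]
        have hlt : ‖w - x0‖ ^ 2 < r0 ^ 2 := by linarith only [hnorm, hu2, ht2]
        exact lt_of_pow_lt_pow_left₀ 2 hr0.le hlt
      refine ⟨hwball, fun hwK => ?_⟩
      have h1 : dist y w ≤ dist y z + dist z w := dist_triangle _ _ _
      have h2 : dist z w = |u| := by
        rw [dist_eq_norm]
        have hzw : z - w = (-u) • ν := by
          have : w = x0 + ((z - x0) + u • ν) := by
            rw [← hwu]; abel
          rw [this]; module
        rw [hzw, norm_smul, hν, Real.norm_eq_abs, abs_neg, mul_one]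
      have h3 : d ≤ dist y w := infDist_le_dist_of_mem hwK
      rw [hyz, h2] at h1
      linarith only [h1, h3, hyz3b, hu, htd]
    have hpν : (inner ℝ (p - x0) ν : ℝ) = t := by
      have hvec : p - x0 = (z - x0) + t • ν := by rw [hpdef]; abel
      rw [hvec, inner_add_left, real_inner_smul_left, hzν, hνν]
      ring
    have hqν : (inner ℝ (q - x0) ν : ℝ) = -t := by
      have hvec : q - x0 = (z - x0) + (-t) • ν := by rw [hqdef]; module
      rw [hvec, inner_add_left, real_inner_smul_left, hzν, hνν]
      ring
    exact hsepC C hCconn hCsub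
      ⟨⟨p, right_mem_segment ℝ q p, by rw [hpν]; exact hbt⟩,
       ⟨q, left_mem_segment ℝ q p, by rw [hqν]; linarith⟩⟩
  have hcond1 : ∀ y ∈ K ∩ ball x0 r0, infDist y (lineThrough x0 v) ≤ 4 * β * r0 := by
    intro y hy
    refine (hline y).trans ((hKstrip y hy).trans ?_)
    rw [hbdef]
    linarith only [mul_nonneg hβ0 hr0.le]
  have hmem : (4 * β) ∈ {ε : ℝ | 0 ≤ ε ∧ ∃ v : E2, v ≠ 0 ∧
      (∀ y ∈ K ∩ ball x0 r0, infDist y (lineThrough x0 v) ≤ ε * r0) ∧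
      (∀ y ∈ lineThrough x0 v ∩ ball x0 r0, infDist y K ≤ ε * r0)} :=
    ⟨by linarith, v, hvne, hcond1, hmain⟩
  exact csInf_le ⟨0, fun x hx => hx.1⟩ hmem
end
end

section
/- Let ε > 0 and let K, E be relatively closed subsets of B(x0,r0) with x0 ∈ K ⊆ E. Assume E separates B(x0,r0), β_E(x0,r0) ≤ ε, and r0^{-1} H¹(E \ K) ≤ ε. Then the bilateral flatness of K satisfies β^bil_K(x0,r0) ≤ 4ε. -/
open Metric Set MeasureTheory

noncomputable section

set_option maxHeartbeats 2000000 in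
/-- If `E` is a separating extension of `K` with flatness at most `ε` and
`H¹(E \ K) ≤ ε r0`, then the bilateral flatness of `K` satisfies `β^bil_K(x0,r0) ≤ 4ε`. -/
theorem bilFlatness_le_of_separating_extension (K E : Set E2) (x0 : E2) (r0 ε : ℝ)
    (hr0 : 0 < r0) (hε : 0 < ε)
    (hK : RelClosedIn K (ball x0 r0)) (hE : RelClosedIn E (ball x0 r0))
    (hx0 : x0 ∈ K) (hKE : K ⊆ E)
    (hsep : Separates E x0 r0)
    (hflat : flatness E x0 r0 ≤ ε)
    (hholes : μH[1] (E \ K) ≤ ENNReal.ofReal (ε * r0)) :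
    bilFlatness K x0 r0 ≤ 4 * ε := by
  obtain ⟨-, ν, hν1, hνE, hνsep⟩ := hsep
  have hεr : 0 < ε * r0 := mul_pos hε hr0
  have hflatr : flatness E x0 r0 * r0 ≤ ε * r0 := mul_le_mul_of_nonneg_right hflat hr0.le
  -- components of ν
  have hab : ν 0 ^ 2 + ν 1 ^ 2 = 1 := by
    have h := hν1
    rw [EuclideanSpace.norm_eq] at h
    have h2 : Real.sqrt (∑ i : Fin 2, ‖ν i‖ ^ 2) = 1 := h
    rw [Fin.sum_univ_two, Real.norm_eq_abs, Real.norm_eq_abs, sq_abs, sq_abs] at h2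
    nlinarith [Real.sq_sqrt (by positivity : (0:ℝ) ≤ ν 0 ^ 2 + ν 1 ^ 2), h2]
  have hinner : ∀ x y : E2, (inner ℝ x y : ℝ) = x 0 * y 0 + x 1 * y 1 := fun x y => by
    simp [PiLp.inner_apply, Fin.sum_univ_two, RCLike.inner_apply, mul_comm]
  obtain ⟨w, hw0, hw1⟩ : ∃ w : E2, w 0 = -(ν 1) ∧ w 1 = ν 0 :=
    ⟨(WithLp.equiv 2 (Fin 2 → ℝ)).symm ![-(ν 1), ν 0], rfl, rfl⟩
  have hwv : (inner ℝ w ν : ℝ) = 0 := by rw [hinner, hw0, hw1]; ring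
  have hvw : (inner ℝ ν w : ℝ) = 0 := by rw [real_inner_comm]; exact hwv
  have hww : (inner ℝ w w : ℝ) = 1 := by rw [hinner, hw0, hw1]; linear_combination hab
  have hvv : (inner ℝ ν ν : ℝ) = 1 := by rw [hinner]; linear_combination hab
  have hwnorm : ‖w‖ = 1 := by
    have h := real_inner_self_eq_norm_sq w
    rw [hww] at h
    nlinarith [norm_nonneg w]
  have hwne : w ≠ 0 := by
    intro h; rw [h, norm_zero] at hwnorm; norm_num at hwnorm
  have hnormsq : ∀ t c : ℝ, ‖t • w + c • ν‖ ^ 2 = t ^ 2 + c ^ 2 := by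
    intro t c
    rw [← real_inner_self_eq_norm_sq]
    simp only [inner_add_left, inner_add_right, real_inner_smul_left, real_inner_smul_right,
      hww, hvv, hwv, hvw]
    ring
  -- decomposition: the residual of projecting on w is the ν-component
  have hdecomp : ∀ u : E2, u - (inner ℝ u w : ℝ) • w = (inner ℝ u ν : ℝ) • ν := by
    intro u
    have hadd : ∀ (z z' : E2) (i : Fin 2), (z - z') i = z i - z' i := fun _ _ _ => rfl
    have hs : ∀ (c : ℝ) (z : E2) (i : Fin 2), (c • z) i = c * z i := fun _ _ _ => rfl
    ext i
    fin_cases i <;>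
      simp only [Fin.zero_eta, Fin.mk_one, hadd, hs, hinner, hw0, hw1]
    · linear_combination (-(u 0)) * hab
    · linear_combination (-(u 1)) * hab
  -- Part (a)
  have hA : ∀ y ∈ K ∩ ball x0 r0, infDist y (lineThrough x0 w) ≤ 4 * ε * r0 := by
    intro y hy
    have h1 : |(inner ℝ (y - x0) ν : ℝ)| ≤ flatness E x0 r0 * r0 := hνE y ⟨hKE hy.1, hy.2⟩
    have hz : x0 + (inner ℝ (y - x0) w : ℝ) • w ∈ lineThrough x0 w := ⟨_, rfl⟩
    have hyz : y - (x0 + (inner ℝ (y - x0) w : ℝ) • w) = (y - x0) - (inner ℝ (y - x0) w : ℝ) • w := by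
      abel
    have hdist : dist y (x0 + (inner ℝ (y - x0) w : ℝ) • w) = |(inner ℝ (y - x0) ν : ℝ)| := by
      rw [dist_eq_norm, hyz, hdecomp (y - x0), norm_smul, hν1, mul_one, Real.norm_eq_abs]
    calc infDist y (lineThrough x0 w) ≤ dist y (x0 + (inner ℝ (y - x0) w : ℝ) • w) :=
          infDist_le_dist_of_mem hz
      _ = |(inner ℝ (y - x0) ν : ℝ)| := hdist
      _ ≤ flatness E x0 r0 * r0 := h1
      _ ≤ 4 * ε * r0 := by nlinarith
  -- Lipschitz projections
  have hlip : ∀ y' : E2, LipschitzWith 1 (fun z : E2 => (inner ℝ (z - y') w : ℝ)) := by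
    intro y'
    apply LipschitzWith.of_dist_le_mul
    intro p q
    rw [Real.dist_eq, NNReal.coe_one, one_mul, dist_eq_norm]
    have h : (inner ℝ (p - y') w : ℝ) - (inner ℝ (q - y') w : ℝ) = (inner ℝ (p - q) w : ℝ) := by
      rw [← inner_sub_left]; congr 1; abel
    rw [h]
    calc |(inner ℝ (p - q) w : ℝ)| ≤ ‖p - q‖ * ‖w‖ := abs_real_inner_le_norm _ _
      _ = ‖p - q‖ := by rw [hwnorm, mul_one]
  -- the key sub-claim
  have hsub : ∀ s' : ℝ, |s'| + 2 * (ε * r0) < r0 → infDist (x0 + s' • w) K ≤ 2 * (ε * r0) := by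
    intro s' hs'
    by_contra hcon
    push_neg at hcon
    set y' : E2 := x0 + s' • w with hy'def
    have hy'x0 : dist y' x0 = |s'| := by
      rw [hy'def, dist_eq_norm, add_sub_cancel_left, norm_smul, hwnorm, mul_one, Real.norm_eq_abs]
    have hKdisj : ∀ z ∈ ball y' (2 * (ε * r0)), z ∉ K := by
      intro z hz hzK
      have h1 : infDist y' K ≤ dist y' z := infDist_le_dist_of_mem hzK
      rw [mem_ball, dist_comm] at hz
      linarith
    have hballsub : ball y' (2 * (ε * r0)) ⊆ ball x0 r0 := by
      intro z hz
      rw [mem_ball] at hz ⊢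
      calc dist z x0 ≤ dist z y' + dist y' x0 := dist_triangle _ _ _
        _ < 2 * (ε * r0) + |s'| := by rw [hy'x0]; linarith
        _ ≤ r0 := by linarith
    have hkey : Icc (-(5/4 * (ε * r0))) (5/4 * (ε * r0)) ⊆
        (fun z : E2 => (inner ℝ (z - y') w : ℝ)) '' (E \ K) := by
      intro t ht
      simp only [mem_Icc] at ht
      set p : E2 := y' + (t • w + (3/2 * (ε * r0)) • ν) with hpdef
      set q : E2 := y' + (t • w + (-(3/2 * (ε * r0))) • ν) with hqdef
      have hsegparam : ∀ z ∈ segment ℝ q p, ∃ c : ℝ, |c| ≤ 3/2 * (ε * r0) ∧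
          z - y' = t • w + c • ν := by
        intro z hz
        rw [segment_eq_image'] at hz
        obtain ⟨θ, hθ, rfl⟩ := hz
        simp only [mem_Icc] at hθ
        refine ⟨θ * (3 * (ε * r0)) - 3/2 * (ε * r0), ?_, ?_⟩
        · rw [abs_le]; constructor <;> nlinarith [hθ.1, hθ.2, hεr]
        · rw [hpdef, hqdef]; module
      have hsegsub : segment ℝ q p ⊆ ball y' (2 * (ε * r0)) := by
        intro z hz
        obtain ⟨c, hc, hzc⟩ := hsegparam z hz
        rw [mem_ball, dist_eq_norm, hzc]
        refine lt_of_pow_lt_pow_left₀ 2 (by positivity) ?_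
        rw [hnormsq]
        have hc2 : c ^ 2 ≤ (3/2 * (ε * r0)) ^ 2 := by nlinarith [abs_nonneg c, sq_abs c]
        nlinarith [ht.1, ht.2]
      have hmeet : (E ∩ segment ℝ q p).Nonempty := by
        by_contra hemp
        rw [Set.not_nonempty_iff_eq_empty] at hemp
        have hCE : segment ℝ q p ⊆ ball x0 r0 \ E := by
          intro z hz
          refine ⟨hballsub (hsegsub hz), fun hzE => ?_⟩
          have : z ∈ E ∩ segment ℝ q p := ⟨hzE, hz⟩
          rw [hemp] at this
          exact this
        have hconn : IsConnected (segment ℝ q p) :=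
          (convex_segment q p).isConnected ⟨q, left_mem_segment ℝ q p⟩
        refine hνsep (segment ℝ q p) hconn hCE ⟨⟨p, right_mem_segment ℝ q p, ?_⟩,
          ⟨q, left_mem_segment ℝ q p, ?_⟩⟩
        · have hp : p - x0 = (s' + t) • w + (3/2 * (ε * r0)) • ν := by
            rw [hpdef, hy'def]; module
          rw [hp, inner_add_left, real_inner_smul_left, real_inner_smul_left, hwv, hvv]
          nlinarith
        · have hq : q - x0 = (s' + t) • w + (-(3/2 * (ε * r0))) • ν := by
            rw [hqdef, hy'def]; module
          rw [hq, inner_add_left, real_inner_smul_left, real_inner_smul_left, hwv, hvv]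
          nlinarith
      obtain ⟨e, heE, hesg⟩ := hmeet
      obtain ⟨c, hc, hec⟩ := hsegparam e hesg
      refine ⟨e, ⟨heE, hKdisj e (hsegsub hesg)⟩, ?_⟩
      show (inner ℝ (e - y') w : ℝ) = t
      rw [hec, inner_add_left, real_inner_smul_left, real_inner_smul_left, hww, hvw]
      ring
    -- measure contradiction
    have h1 : (μH[1] : Measure ℝ) (Icc (-(5/4 * (ε * r0))) (5/4 * (ε * r0))) =
        ENNReal.ofReal (5/2 * (ε * r0)) := by
      rw [MeasureTheory.hausdorffMeasure_real, Real.volume_Icc]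
      congr 1; ring
    have h2 := measure_mono (μ := (μH[1] : Measure ℝ)) hkey
    have h3 := (hlip y').hausdorffMeasure_image_le (by norm_num : (0:ℝ) ≤ 1) (E \ K)
    have hμ : ENNReal.ofReal (5/2 * (ε * r0)) ≤ ENNReal.ofReal (ε * r0) := by
      calc ENNReal.ofReal (5/2 * (ε * r0))
          = (μH[1] : Measure ℝ) (Icc (-(5/4 * (ε * r0))) (5/4 * (ε * r0))) := h1.symm
        _ ≤ (μH[1] : Measure ℝ) ((fun z : E2 => (inner ℝ (z - y') w : ℝ)) '' (E \ K)) := h2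
        _ ≤ ((1 : NNReal) : ENNReal) ^ (1 : ℝ) * μH[1] (E \ K) := h3
        _ = μH[1] (E \ K) := by simp
        _ ≤ ENNReal.ofReal (ε * r0) := hholes
    rw [ENNReal.ofReal_le_ofReal_iff hεr.le] at hμ
    linarith
  -- Part (b)
  have hB : ∀ y ∈ lineThrough x0 w ∩ ball x0 r0, infDist y K ≤ 4 * ε * r0 := by
    rintro y ⟨⟨s, rfl⟩, hyb⟩
    have hdy : dist (x0 + s • w) x0 = |s| := by
      rw [dist_eq_norm, add_sub_cancel_left, norm_smul, hwnorm, mul_one, Real.norm_eq_abs]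
    rw [mem_ball, hdy] at hyb
    rcases le_or_gt |s| (2 * (ε * r0)) with hs | hs
    · calc infDist (x0 + s • w) K ≤ dist (x0 + s • w) x0 := infDist_le_dist_of_mem hx0
        _ = |s| := hdy
        _ ≤ 4 * ε * r0 := by linarith
    · rcases le_or_gt 0 s with hpos | hneg
      · have habs : |s| = s := abs_of_nonneg hpos
        have h1 : |s - 2 * (ε * r0)| + 2 * (ε * r0) < r0 := by
          rw [abs_of_nonneg (by linarith [abs_nonneg s, habs])]
          linarith [habs ▸ hyb]
        have hd : dist (x0 + s • w) (x0 + (s - 2 * (ε * r0)) • w) = 2 * (ε * r0) := by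
          rw [dist_eq_norm]
          have hv : (x0 + s • w) - (x0 + (s - 2 * (ε * r0)) • w) = (2 * (ε * r0)) • w := by
            module
          rw [hv, norm_smul, hwnorm, mul_one, Real.norm_eq_abs, abs_of_pos (by linarith)]
        calc infDist (x0 + s • w) K
            ≤ infDist (x0 + (s - 2 * (ε * r0)) • w) K + dist (x0 + s • w) (x0 + (s - 2 * (ε * r0)) • w) :=
              infDist_le_infDist_add_dist
          _ ≤ 2 * (ε * r0) + 2 * (ε * r0) := by
              rw [hd]; linarith [hsub (s - 2 * (ε * r0)) h1]
          _ ≤ 4 * ε * r0 := by linarith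
      · have habs : |s| = -s := abs_of_neg hneg
        have h1 : |s + 2 * (ε * r0)| + 2 * (ε * r0) < r0 := by
          rw [abs_of_nonpos (by linarith [habs ▸ hs])]
          linarith [habs ▸ hyb]
        have hd : dist (x0 + s • w) (x0 + (s + 2 * (ε * r0)) • w) = 2 * (ε * r0) := by
          rw [dist_eq_norm]
          have hv : (x0 + s • w) - (x0 + (s + 2 * (ε * r0)) • w) = (-(2 * (ε * r0))) • w := by
            module
          rw [hv, norm_smul, hwnorm, mul_one, Real.norm_eq_abs, abs_of_neg (by linarith), neg_neg]
        calc infDist (x0 + s • w) K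
            ≤ infDist (x0 + (s + 2 * (ε * r0)) • w) K + dist (x0 + s • w) (x0 + (s + 2 * (ε * r0)) • w) :=
              infDist_le_infDist_add_dist
          _ ≤ 2 * (ε * r0) + 2 * (ε * r0) := by
              rw [hd]; linarith [hsub (s + 2 * (ε * r0)) h1]
          _ ≤ 4 * ε * r0 := by linarith
  -- assemble
  have hmem : (4 * ε) ∈ {ε' : ℝ | 0 ≤ ε' ∧ ∃ v : E2, v ≠ 0 ∧
      (∀ y ∈ K ∩ ball x0 r0, infDist y (lineThrough x0 v) ≤ ε' * r0) ∧
      (∀ y ∈ lineThrough x0 v ∩ ball x0 r0, infDist y K ≤ ε' * r0)} :=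
    ⟨by positivity, w, hwne, hA, hB⟩
  exact csInf_le ⟨0, fun x hx => hx.1⟩ hmem
end
end

section
/- Let E be a relatively closed subset of B(x0,r0) containing x0 that separates B(x0,r0), with β_E(x0,r0) ≤ 1/4 for some γ > 0. If x ∈ E ∩ B(x0,r0) and γ > 0 are such that B(x, γ r0) ⊆ B(x0,r0) and β_E(x0,r0) ≤ γ/4, then E still separates B(x, γ r0). -/
open Metric Set MeasureTheory

noncomputable section

-- helper block to be inserted
noncomputable def rot (v : E2) : E2 := WithLp.toLp 2 ![-(v 1), v 0]

lemma inner2 (a b : E2) : (inner ℝ a b : ℝ) = a 0 * b 0 + a 1 * b 1 := by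
  simp [PiLp.inner_apply, Fin.sum_univ_two]; ring

lemma normsq2 (a : E2) : ‖a‖^2 = a 0^2 + a 1^2 := by
  rw [← real_inner_self_eq_norm_sq]; rw [inner2]; ring

lemma rot_zero (v : E2) : rot v 0 = -(v 1) := rfl
lemma rot_one (v : E2) : rot v 1 = v 0 := rfl

lemma norm_rot (v : E2) : ‖rot v‖ = ‖v‖ := by
  have h : ‖rot v‖^2 = ‖v‖^2 := by rw [normsq2, normsq2, rot_zero, rot_one]; ring
  have h2 : 0 ≤ ‖rot v‖ := norm_nonneg _
  have h3 : 0 ≤ ‖v‖ := norm_nonneg _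
  nlinarith

lemma inner_rot_self (v : E2) : (inner ℝ v (rot v) : ℝ) = 0 := by
  rw [inner2, rot_zero, rot_one]; ring

lemma inner_rot_self' (v : E2) : (inner ℝ (rot v) v : ℝ) = 0 := by
  rw [real_inner_comm]; exact inner_rot_self v

lemma parseval2 (u z : E2) (hu : ‖u‖ = 1) :
    ‖z‖^2 = (inner ℝ z u : ℝ)^2 + (inner ℝ z (rot u) : ℝ)^2 := by
  have h1 : u 0^2 + u 1^2 = 1 := by have := normsq2 u; rw [hu] at this; linarith [this]
  rw [normsq2, inner2, inner2, rot_zero, rot_one]; nlinarith [h1]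

lemma norm_sub_proj (u z : E2) (hu : ‖u‖ = 1) :
    ‖z - (inner ℝ z (rot u) : ℝ) • rot u‖ = |(inner ℝ z u : ℝ)| := by
  have hw : ‖rot u‖ = 1 := by rw [norm_rot]; exact hu
  have hsq : ‖z - (inner ℝ z (rot u) : ℝ) • rot u‖^2 = (inner ℝ z u : ℝ)^2 := by
    rw [norm_sub_sq_real, real_inner_smul_right, norm_smul]
    rw [Real.norm_eq_abs, mul_pow, sq_abs, hw]
    have := parseval2 u z hu
    nlinarith
  have h1 : 0 ≤ ‖z - (inner ℝ z (rot u) : ℝ) • rot u‖ := norm_nonneg _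
  have h2 : 0 ≤ |(inner ℝ z u : ℝ)| := abs_nonneg _
  nlinarith [sq_abs (inner ℝ z u : ℝ)]

lemma abs_inner_rot_le (u z : E2) (hu : ‖u‖ = 1) (t : ℝ) :
    |(inner ℝ z (rot u) : ℝ)| ≤ ‖z - t • u‖ := by
  have hw : ‖rot u‖ = 1 := by rw [norm_rot]; exact hu
  have h : (inner ℝ (z - t • u) (rot u) : ℝ) = (inner ℝ z (rot u) : ℝ) := by
    rw [inner_sub_left, real_inner_smul_left, inner_rot_self u]; ring
  calc |(inner ℝ z (rot u) : ℝ)| = |(inner ℝ (z - t • u) (rot u) : ℝ)| := by rw [h]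
    _ ≤ ‖z - t • u‖ * ‖rot u‖ := abs_real_inner_le_norm _ _
    _ = ‖z - t • u‖ := by rw [hw, mul_one]

lemma norm_comb (u : E2) (hu : ‖u‖ = 1) (a b : ℝ) :
    ‖a • u + b • rot u‖^2 = a^2 + b^2 := by
  have hw : ‖rot u‖ = 1 := by rw [norm_rot]; exact hu
  rw [norm_add_sq_real, real_inner_smul_left, real_inner_smul_right, inner_rot_self,
    norm_smul, norm_smul, Real.norm_eq_abs, Real.norm_eq_abs, hu, hw]
  rw [mul_pow, mul_pow, sq_abs, sq_abs]; ring

lemma inner_comb (u m : E2) (a b : ℝ) :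
    (inner ℝ (a • u + b • rot u) m : ℝ) = a * (inner ℝ u m : ℝ) + b * (inner ℝ (rot u) m : ℝ) := by
  rw [inner_add_left, real_inner_smul_left, real_inner_smul_left]

noncomputable def u0 : E2 := EuclideanSpace.single 0 1

lemma u0_norm : ‖u0‖ = 1 := by
  rw [u0, EuclideanSpace.norm_single]; norm_num

lemma mem_lineThrough_self (x v : E2) : x ∈ lineThrough x v := ⟨0, by simp⟩

lemma flatness_nonneg (K : Set E2) (x : E2) (ρ : ℝ) : 0 ≤ flatness K x ρ :=
  Real.sInf_nonneg fun _ hε => hε.1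

lemma convex_combo_gt {a b s u t : ℝ} (ha : 0 ≤ a) (hb : 0 ≤ b) (hab : a + b = 1)
    (hs : t < s) (hu : t < u) : t < a * s + b * u := by
  rcases eq_or_lt_of_le ha with h | h
  · have hb1 : b = 1 := by linarith
    rw [← h, hb1]; linarith
  · have h1 : a * t < a * s := by nlinarith
    have h2 : b * t ≤ b * u := mul_le_mul_of_nonneg_left hu.le hb
    have h3 : a * t + b * t = t := by rw [← add_mul, hab, one_mul]
    linarith

lemma convex_combo_lt {a b s u t : ℝ} (ha : 0 ≤ a) (hb : 0 ≤ b) (hab : a + b = 1)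
    (hs : s < t) (hu : u < t) : a * s + b * u < t := by
  have := convex_combo_gt ha hb hab (neg_lt_neg hs) (neg_lt_neg hu)
  linarith

lemma combo_sub (a b : ℝ) (y w x : E2) (hab : a + b = 1) :
    a • y + b • w - x = a • (y - x) + b • (w - x) := by
  have h1 : a • (y - x) + b • (w - x) = a • y + b • w - (a • x + b • x) := by
    rw [smul_sub, smul_sub]; abel
  rw [h1, show a • x + b • x = x by rw [← add_smul, hab, one_smul]]

lemma convex_upper (z x n : E2) (ρ t : ℝ) :
    Convex ℝ {y : E2 | y ∈ ball z ρ ∧ t < (inner ℝ (y - x) n : ℝ)} := by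
  intro y hy w hw a b ha hb hab
  refine ⟨convex_ball z ρ hy.1 hw.1 ha hb hab, ?_⟩
  rw [combo_sub a b y w x hab, inner_add_left, real_inner_smul_left, real_inner_smul_left]
  exact convex_combo_gt ha hb hab hy.2 hw.2

lemma convex_lower (z x n : E2) (ρ t : ℝ) :
    Convex ℝ {y : E2 | y ∈ ball z ρ ∧ (inner ℝ (y - x) n : ℝ) < t} := by
  intro y hy w hw a b ha hb hab
  refine ⟨convex_ball z ρ hy.1 hw.1 ha hb hab, ?_⟩
  rw [combo_sub a b y w x hab, inner_add_left, real_inner_smul_left, real_inner_smul_left]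
  exact convex_combo_lt ha hb hab hy.2 hw.2

lemma flatness_attained (K : Set E2) (x : E2) (ρ : ℝ) (hρ : 0 < ρ)
    (hne : (K ∩ ball x ρ).Nonempty) :
    ∃ ν : E2, ‖ν‖ = 1 ∧ ∀ y ∈ K ∩ ball x ρ, |(inner ℝ (y - x) ν : ℝ)| ≤ flatness K x ρ * ρ := by
  set T := K ∩ ball x ρ with hT
  haveI : Nonempty ↥T := hne.to_subtype
  have hzρ : ∀ y : ↥T, ‖(y : E2) - x‖ ≤ ρ := by
    intro y
    have := y.2.2
    rw [mem_ball, dist_eq_norm] at this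
    linarith
  set F : E2 → ℝ := fun n => ⨆ y : ↥T, |(inner ℝ ((y : E2) - x) n : ℝ)| with hF
  have bddF : ∀ n : E2, BddAbove (range fun y : ↥T => |(inner ℝ ((y : E2) - x) n : ℝ)|) := by
    intro n
    refine ⟨ρ * ‖n‖, ?_⟩
    rintro r ⟨y, rfl⟩
    calc |(inner ℝ ((y : E2) - x) n : ℝ)| ≤ ‖(y : E2) - x‖ * ‖n‖ := abs_real_inner_le_norm _ _
      _ ≤ ρ * ‖n‖ := by
          have := hzρ y
          have hn := norm_nonneg n
          nlinarith
  have hFle : ∀ n : E2, ∀ y : ↥T, |(inner ℝ ((y : E2) - x) n : ℝ)| ≤ F n :=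
    fun n y => le_ciSup (bddF n) y
  have hLip : ∀ n m : E2, F n ≤ F m + ρ * ‖n - m‖ := by
    intro n m
    refine ciSup_le fun y => ?_
    have h1 : |(inner ℝ ((y : E2) - x) n : ℝ)| - |(inner ℝ ((y : E2) - x) m : ℝ)|
        ≤ |(inner ℝ ((y : E2) - x) (n - m) : ℝ)| := by
      have := abs_sub_abs_le_abs_sub (inner ℝ ((y : E2) - x) n : ℝ) (inner ℝ ((y : E2) - x) m : ℝ)
      rwa [← inner_sub_right] at this
    have h2 : |(inner ℝ ((y : E2) - x) (n - m) : ℝ)| ≤ ρ * ‖n - m‖ := by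
      calc |(inner ℝ ((y : E2) - x) (n - m) : ℝ)| ≤ ‖(y : E2) - x‖ * ‖n - m‖ :=
            abs_real_inner_le_norm _ _
        _ ≤ ρ * ‖n - m‖ := by
            have := hzρ y
            have := norm_nonneg (n - m)
            nlinarith
    linarith [hFle m y]
  have hcont : Continuous F := by
    refine LipschitzWith.continuous (K := ρ.toNNReal) (LipschitzWith.of_dist_le_mul fun n m => ?_)
    rw [Real.dist_eq, dist_eq_norm, Real.coe_toNNReal ρ hρ.le]
    rw [abs_sub_le_iff]
    constructor
    · linarith [hLip n m]
    · rw [← norm_neg (n - m)]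
      have : -(n - m) = m - n := by abel
      rw [this]
      linarith [hLip m n]
  obtain ⟨ν, hνmem, hmin⟩ := (isCompact_sphere (0 : E2) 1).exists_isMinOn
    ⟨u0, mem_sphere_zero_iff_norm.2 u0_norm⟩ hcont.continuousOn
  have hν : ‖ν‖ = 1 := mem_sphere_zero_iff_norm.1 hνmem
  set S := {ε : ℝ | 0 ≤ ε ∧ ∃ v : E2, v ≠ 0 ∧
    ∀ y ∈ K ∩ ball x ρ, infDist y (lineThrough x v) ≤ ε * ρ} with hS
  have hSne : S.Nonempty := by
    refine ⟨1, zero_le_one, u0, ?_, ?_⟩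
    · intro h; rw [← norm_eq_zero, u0_norm] at h; simp at h
    · intro y hy
      calc infDist y (lineThrough x u0) ≤ dist y x :=
            infDist_le_dist_of_mem (mem_lineThrough_self x _)
        _ ≤ 1 * ρ := by rw [one_mul]; exact (mem_ball.1 hy.2).le
  have key : ∀ ε ∈ S, F ν ≤ ε * ρ := by
    rintro ε ⟨hε0, v, hv, hinf⟩
    set u := ‖v‖⁻¹ • v with hu'
    have hu : ‖u‖ = 1 := norm_smul_inv_norm hv
    have hrotu : rot u ∈ sphere (0 : E2) 1 :=
      mem_sphere_zero_iff_norm.2 (by rw [norm_rot]; exact hu)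
    have step : F (rot u) ≤ ε * ρ := by
      refine ciSup_le fun y => ?_
      have hlow : |(inner ℝ ((y : E2) - x) (rot u) : ℝ)| ≤ infDist (y : E2) (lineThrough x v) := by
        by_contra hcon
        push_neg at hcon
        obtain ⟨p, hpL, hplt⟩ :=
          (infDist_lt_iff ⟨x, mem_lineThrough_self x v⟩).1 hcon
        obtain ⟨t, rfl⟩ := hpL
        have hd : dist (y : E2) (x + t • v) = ‖((y : E2) - x) - (t * ‖v‖) • u‖ := by
          rw [dist_eq_norm]
          congr 1
          rw [hu', smul_smul]
          rw [mul_assoc, mul_inv_cancel₀ (norm_ne_zero_iff.2 hv), mul_one]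
          abel
        have := abs_inner_rot_le u ((y : E2) - x) hu (t * ‖v‖)
        rw [← hd] at this
        linarith
      exact hlow.trans (hinf _ y.2)
    exact (hmin hrotu).trans step
  have hfin : F ν ≤ flatness K x ρ * ρ := by
    have h1 : F ν / ρ ≤ sInf S := le_csInf hSne fun ε hε => (div_le_iff₀ hρ).2 (key ε hε)
    have h2 : flatness K x ρ = sInf S := rfl
    rw [h2]
    exact (div_le_iff₀ hρ).1 h1
  exact ⟨ν, hν, fun y hy => (hFle ν ⟨y, hy⟩).trans hfin⟩

set_option maxHeartbeats 1000000 in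
/-- Separation in smaller balls: if `E` separates `B(x0,r0)`, `x ∈ E ∩ B(x0,r0)`, `γ > 0`,
`B(x, γ r0) ⊆ B(x0, r0)` and `β_E(x0,r0) ≤ γ/4`, then `E` still separates `B(x, γ r0)`. -/
theorem separates_smaller_ball (E : Set E2) (x0 x : E2) (r0 γ : ℝ)
    (hr0 : 0 < r0) (hγ : 0 < γ)
    (hE : RelClosedIn E (ball x0 r0)) (hx0 : x0 ∈ E)
    (hsep : Separates E x0 r0)
    (hx : x ∈ E ∩ ball x0 r0)
    (hsub : ball x (γ * r0) ⊆ ball x0 r0)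
    (hflat : flatness E x0 r0 ≤ γ / 4) :
    Separates E x (γ * r0) := by
  have hρ : 0 < γ * r0 := mul_pos hγ hr0
  set ρ := γ * r0 with hρdef
  have hxE : x ∈ E := hx.1
  obtain ⟨hβhalf, ν, hν, hstrip, hnosplit⟩ := hsep
  set β := flatness E x0 r0 with hβdef
  have hβ0 : 0 ≤ β := flatness_nonneg _ _ _
  -- flatness in the small ball is at most 2β/γ
  have hβ'le : flatness E x ρ ≤ 2 * β / γ := by
    refine csInf_le ⟨0, fun ε hε => hε.1⟩ ?_
    refine ⟨by positivity, rot ν, ?_, ?_⟩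
    · rw [← norm_ne_zero_iff, norm_rot, hν]; norm_num
    · intro y hy
      have hyb : y ∈ E ∩ ball x0 r0 := ⟨hy.1, hsub hy.2⟩
      have h1 : infDist y (lineThrough x (rot ν))
          ≤ dist y (x + (inner ℝ (y - x) (rot ν) : ℝ) • rot ν) :=
        infDist_le_dist_of_mem ⟨_, rfl⟩
      have h2 : dist y (x + (inner ℝ (y - x) (rot ν) : ℝ) • rot ν) = |(inner ℝ (y - x) ν : ℝ)| := by
        rw [dist_eq_norm]
        rw [show y - (x + (inner ℝ (y - x) (rot ν) : ℝ) • rot ν)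
            = (y - x) - (inner ℝ (y - x) (rot ν) : ℝ) • rot ν by abel]
        exact norm_sub_proj ν (y - x) hν
      have h3 : |(inner ℝ (y - x) ν : ℝ)| ≤ 2 * β * r0 := by
        rw [show y - x = (y - x0) - (x - x0) by abel, inner_sub_left]
        have hy1 := hstrip y hyb
        have hy2 := hstrip x hx
        have := abs_sub (inner ℝ (y - x0) ν : ℝ) (inner ℝ (x - x0) ν : ℝ)
        linarith
      have h4 : 2 * β / γ * ρ = 2 * β * r0 := by
        rw [hρdef]; field_simp
      rw [h4]
      linarith
  set β' := flatness E x ρ with hβ'def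
  have hβ'0 : 0 ≤ β' := flatness_nonneg _ _ _
  have hβγ : 2 * β / γ ≤ 1 / 2 := by
    rw [div_le_iff₀ hγ]; linarith
  have hhalf : β' ≤ 1 / 2 := le_trans hβ'le hβγ
  refine ⟨hhalf, ?_⟩
  obtain ⟨ν', hν', hstrip'⟩ :=
    flatness_attained E x ρ hρ ⟨x, hxE, mem_ball_self hρ⟩
  refine ⟨ν', hν', hstrip', ?_⟩
  rintro C hC hCsub ⟨⟨p, hpC, hp⟩, ⟨q, hqC, hq⟩⟩
  -- geometry of the two normals
  set c := (inner ℝ ν ν' : ℝ) with hc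
  set d := (inner ℝ ν (rot ν') : ℝ) with hd
  have hcd : c ^ 2 + d ^ 2 = 1 := by
    have h := parseval2 ν' ν hν'
    rw [hν, one_pow] at h
    rw [hc, hd]
    linarith
  have habs : 1 ≤ |c| + |d| := by
    nlinarith [sq_abs c, sq_abs d, abs_nonneg c, abs_nonneg d]
  set σc : ℝ := if 0 ≤ c then 1 else -1 with hσc
  set σd : ℝ := if 0 ≤ d then 1 else -1 with hσd
  have hσcc : σc * c = |c| := by
    rw [hσc]; split_ifs with h
    · rw [abs_of_nonneg h]; ring
    · rw [abs_of_neg (lt_of_not_ge h)]; ring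
  have hσdd : σd * d = |d| := by
    rw [hσd]; split_ifs with h
    · rw [abs_of_nonneg h]; ring
    · rw [abs_of_neg (lt_of_not_ge h)]; ring
  have hσc1 : σc = 1 ∨ σc = -1 := by rw [hσc]; split_ifs <;> simp
  have hσd1 : σd = 1 ∨ σd = -1 := by rw [hσd]; split_ifs <;> simp
  have hσcsq : σc ^ 2 = 1 := by rcases hσc1 with h | h <;> rw [h] <;> norm_num
  have hσdsq : σd ^ 2 = 1 := by rcases hσd1 with h | h <;> rw [h] <;> norm_num
  set a : ℝ := 3 / 5 * ρ with ha
  have ha0 : 0 < a := by rw [ha]; linarith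
  -- the four auxiliary regions
  set Sp := {y : E2 | y ∈ ball x ρ ∧ β' * ρ < (inner ℝ (y - x) ν' : ℝ)} with hSp
  set Sm := {y : E2 | y ∈ ball x ρ ∧ (inner ℝ (y - x) ν' : ℝ) < -(β' * ρ)} with hSm
  set Up := {y : E2 | y ∈ ball x ρ ∧ β * r0 < (inner ℝ (y - x0) ν : ℝ)} with hUp
  set Um := {y : E2 | y ∈ ball x ρ ∧ (inner ℝ (y - x0) ν : ℝ) < -(β * r0)} with hUm
  -- generic facts about the 2 special points
  have hβρa : β' * ρ < a := by
    have : β' * ρ ≤ 1 / 2 * ρ := by nlinarith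
    rw [ha]; linarith
  have hβr0a : 2 * (β * r0) < a := by
    have h1 : β * r0 ≤ γ / 4 * r0 := by
      have := mul_le_mul_of_nonneg_right hflat hr0.le
      linarith
    rw [ha, hρdef]; linarith
  have key_pt : ∀ s : ℝ, s = 1 ∨ s = -1 →
      (x + (s * (a * σc)) • ν' + (s * (a * σd)) • rot ν') ∈ ball x ρ ∧
      (inner ℝ ((x + (s * (a * σc)) • ν' + (s * (a * σd)) • rot ν') - x) ν' : ℝ) = s * (a * σc) ∧
      (inner ℝ ((x + (s * (a * σc)) • ν' + (s * (a * σd)) • rot ν') - x) ν : ℝ)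
        = s * a * (|c| + |d|) := by
    intro s hs
    have hssq : s ^ 2 = 1 := by rcases hs with h | h <;> rw [h] <;> norm_num
    set w : E2 := (s * (a * σc)) • ν' + (s * (a * σd)) • rot ν' with hw
    have hsub' : (x + (s * (a * σc)) • ν' + (s * (a * σd)) • rot ν') - x = w := by
      rw [hw]; abel
    have hwn : ‖w‖ ^ 2 = 2 * a ^ 2 := by
      rw [hw, norm_comb ν' hν']
      have : (s * (a * σc)) ^ 2 + (s * (a * σd)) ^ 2
          = s ^ 2 * a ^ 2 * (σc ^ 2 + σd ^ 2) := by ring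
      rw [this, hssq, hσcsq, hσdsq]; ring
    refine ⟨?_, ?_, ?_⟩
    · rw [mem_ball, dist_eq_norm, hsub']
      nlinarith [norm_nonneg w, hwn]
    · rw [hsub', hw, inner_comb, real_inner_self_eq_norm_sq, hν', inner_rot_self' ν']
      ring
    · rw [hsub', hw, inner_comb]
      have e1 : (inner ℝ ν' ν : ℝ) = c := by rw [hc]; exact (real_inner_comm ν' ν).symm
      have e2 : (inner ℝ (rot ν') ν : ℝ) = d := by rw [hd]; exact (real_inner_comm (rot ν') ν).symm
      rw [e1, e2, ← hσcc, ← hσdd]; ring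
  obtain ⟨h1ball, h1in', h1in⟩ := key_pt 1 (Or.inl rfl)
  obtain ⟨h2ball, h2in', h2in⟩ := key_pt (-1) (Or.inr rfl)
  set y1 : E2 := x + ((1 : ℝ) * (a * σc)) • ν' + ((1 : ℝ) * (a * σd)) • rot ν' with hy1
  set y2 : E2 := x + ((-1 : ℝ) * (a * σc)) • ν' + ((-1 : ℝ) * (a * σd)) • rot ν' with hy2
  -- y1, y2 lie beyond the big strip on opposite sides
  have hxstrip : |(inner ℝ (x - x0) ν : ℝ)| ≤ β * r0 := hstrip x hx
  have hsplit1 : (inner ℝ (y1 - x0) ν : ℝ) = (inner ℝ (y1 - x) ν : ℝ) + (inner ℝ (x - x0) ν : ℝ) := by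
    rw [show y1 - x0 = (y1 - x) + (x - x0) by abel, inner_add_left]
  have hsplit2 : (inner ℝ (y2 - x0) ν : ℝ) = (inner ℝ (y2 - x) ν : ℝ) + (inner ℝ (x - x0) ν : ℝ) := by
    rw [show y2 - x0 = (y2 - x) + (x - x0) by abel, inner_add_left]
  have habs' : a ≤ a * (|c| + |d|) := by nlinarith
  have hy1U : y1 ∈ Up := by
    refine ⟨h1ball, ?_⟩
    rw [hsplit1, h1in]
    have := abs_le.1 hxstrip
    nlinarith
  have hy2U : y2 ∈ Um := by
    refine ⟨h2ball, ?_⟩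
    rw [hsplit2, h2in]
    have := abs_le.1 hxstrip
    nlinarith
  -- y1, y2 lie in Sp ∪ Sm
  have hy1S : y1 ∈ Sp ∪ Sm := by
    rcases hσc1 with h | h
    · left; refine ⟨h1ball, ?_⟩; rw [h1in', h]; linarith
    · right; refine ⟨h1ball, ?_⟩; rw [h1in', h]; linarith
  have hy2S : y2 ∈ Sp ∪ Sm := by
    rcases hσc1 with h | h
    · right; refine ⟨h2ball, ?_⟩; rw [h2in', h]; linarith
    · left; refine ⟨h2ball, ?_⟩; rw [h2in', h]; linarith
  -- the four regions avoid E and are inside the big ball minus E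
  have hSpE : Sp ⊆ ball x0 r0 \ E := by
    rintro y ⟨hyb, hyi⟩
    refine ⟨hsub hyb, fun hyE => ?_⟩
    have := hstrip' y ⟨hyE, hyb⟩
    rw [abs_le] at this
    linarith [this.2]
  have hSmE : Sm ⊆ ball x0 r0 \ E := by
    rintro y ⟨hyb, hyi⟩
    refine ⟨hsub hyb, fun hyE => ?_⟩
    have := hstrip' y ⟨hyE, hyb⟩
    rw [abs_le] at this
    linarith [this.1]
  have hUpE : Up ⊆ ball x0 r0 \ E := by
    rintro y ⟨hyb, hyi⟩
    refine ⟨hsub hyb, fun hyE => ?_⟩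
    have := hstrip y ⟨hyE, hsub hyb⟩
    rw [abs_le] at this
    linarith [this.2]
  have hUmE : Um ⊆ ball x0 r0 \ E := by
    rintro y ⟨hyb, hyi⟩
    refine ⟨hsub hyb, fun hyE => ?_⟩
    have := hstrip y ⟨hyE, hsub hyb⟩
    rw [abs_le] at this
    linarith [this.1]
  have hCE : C ⊆ ball x0 r0 \ E := fun y hy => ⟨hsub (hCsub hy).1, (hCsub hy).2⟩
  -- p and q witness that C meets Sp and Sm
  have hpSp : p ∈ Sp := ⟨(hCsub hpC).1, hp⟩
  have hqSm : q ∈ Sm := ⟨(hCsub hqC).1, hq⟩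
  -- connectivity of each region
  have hSpconn : IsConnected Sp := ⟨⟨p, hpSp⟩, (convex_upper x x ν' ρ (β' * ρ)).isPreconnected⟩
  have hSmconn : IsConnected Sm := ⟨⟨q, hqSm⟩, (convex_lower x x ν' ρ (-(β' * ρ))).isPreconnected⟩
  have hUpconn : IsConnected Up := ⟨⟨y1, hy1U⟩, (convex_upper x x0 ν ρ (β * r0)).isPreconnected⟩
  have hUmconn : IsConnected Um := ⟨⟨y2, hy2U⟩, (convex_lower x x0 ν ρ (-(β * r0))).isPreconnected⟩
  -- build the big connected set
  have hA1 : IsConnected (C ∪ Sp) := IsConnected.union ⟨p, hpC, hpSp⟩ hC hSpconn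
  have hA2 : IsConnected (C ∪ Sp ∪ Sm) := IsConnected.union ⟨q, Or.inl hqC, hqSm⟩ hA1 hSmconn
  have hA3 : IsConnected (C ∪ Sp ∪ Sm ∪ Up) := by
    refine IsConnected.union ⟨y1, ?_, hy1U⟩ hA2 hUpconn
    rcases hy1S with h | h
    · exact Or.inl (Or.inr h)
    · exact Or.inr h
  have hA4 : IsConnected (C ∪ Sp ∪ Sm ∪ Up ∪ Um) := by
    refine IsConnected.union ⟨y2, ?_, hy2U⟩ hA3 hUmconn
    rcases hy2S with h | h
    · exact Or.inl (Or.inl (Or.inr h))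
    · exact Or.inl (Or.inr h)
  have hAsub : C ∪ Sp ∪ Sm ∪ Up ∪ Um ⊆ ball x0 r0 \ E := by
    intro y hy
    rcases hy with ((((h | h) | h) | h) | h)
    exacts [hCE h, hSpE h, hSmE h, hUpE h, hUmE h]
  exact hnosplit _ hA4 hAsub
    ⟨⟨y1, Or.inl (Or.inr hy1U), hy1U.2⟩, ⟨y2, Or.inr hy2U, hy2U.2⟩⟩
end
end
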